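/- arXiv:2205.06730 — 4 statements merged into one kernel-verified Lean document; each statement's English description precedes it below -/
import Mathlib

section
/- The client-sampling variance under a sampling policy with rate r equals a trace of a quadratic form in the selection covariance: E_q[ ‖Δ(S) − v̄‖² ] = Σ_{i=1}^N Σ_{j=1}^N (p_i p_j)/(r_i r_j) ⟨v_i, v_j⟩ · Σ_{ij}, where Σ_{ij} = E[X_i X_j] − r_i r_j is the covariance of the selection indicators. Equivalently, E_q[ ‖Δ(S) − v̄‖² ] = Tr(Y Yᵀ Σ), where Y ∈ ℝ^{N×d} is the matrix whose k-th row is (p_k/r_k) v_k and Σ is the covariance matrix of X. -/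
/-- The client-sampling variance equals a trace of a quadratic form in the selection
covariance:
`E_q[‖Δ(S) − v̄‖²] = Σᵢⱼ (pᵢpⱼ)/(rᵢrⱼ) ⟨vᵢ, vⱼ⟩ Σᵢⱼ = Tr(Y Yᵀ Σ)`,
where `Σᵢⱼ = E[XᵢXⱼ] − rᵢrⱼ` and `Y` has `k`-th row `(p_k/r_k) v_k`. -/
theorem stmt2 (N d : ℕ)
    (p : Fin N → ℝ) (hp0 : ∀ k, 0 ≤ p k) (hp1 : ∑ k, p k = 1)
    (q : Finset (Fin N) → ℝ) (hq0 : ∀ S, 0 ≤ q S)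
    (hq1 : ∑ S : Finset (Fin N), q S = 1) (hqempty : q ∅ = 0)
    (v : Fin N → EuclideanSpace ℝ (Fin d))
    (r : Fin N → ℝ)
    (hr : ∀ k, r k = ∑ S ∈ Finset.univ.filter (fun S : Finset (Fin N) => k ∈ S), q S)
    (hrpos : ∀ k, 0 < r k)
    (Δ : Finset (Fin N) → EuclideanSpace ℝ (Fin d))
    (hΔ : ∀ S, Δ S = ∑ k ∈ S, (p k / r k) • v k)
    (vbar : EuclideanSpace ℝ (Fin d))
    (hvbar : vbar = ∑ k, p k • v k)
    (cov : Matrix (Fin N) (Fin N) ℝ)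
    (hcov : ∀ i j, cov i j =
      (∑ S ∈ Finset.univ.filter (fun S : Finset (Fin N) => i ∈ S ∧ j ∈ S), q S)
        - r i * r j)
    (Y : Matrix (Fin N) (Fin d) ℝ)
    (hY : ∀ k l, Y k l = (p k / r k) * v k l) :
    (∑ S : Finset (Fin N), q S * ‖Δ S - vbar‖ ^ 2)
      = ∑ i, ∑ j, (p i * p j) / (r i * r j) * (inner ℝ (v i) (v j) : ℝ) * cov i j ∧
    (∑ S : Finset (Fin N), q S * ‖Δ S - vbar‖ ^ 2)
      = Matrix.trace (Y * Y.transpose * cov) := by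
  set c : Fin N → ℝ := fun k => p k / r k with hc
  have hcr : ∀ k, c k * r k = p k := fun k => div_mul_cancel₀ (p k) (hrpos k).ne'
  have hD : ∀ S : Finset (Fin N), Δ S - vbar
      = ∑ k, ((if k ∈ S then c k else 0) - p k) • v k := by
    intro S
    have h1 : ∀ k : Fin N, ((if k ∈ S then c k else 0) - p k) • v k
        = (if k ∈ S then c k • v k else 0) - p k • v k := by
      intro k; split <;> simp [sub_smul]
    rw [hΔ S, hvbar, Finset.sum_congr rfl (fun k _ => h1 k), Finset.sum_sub_distrib,
      Finset.sum_ite_mem, Finset.univ_inter]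
  -- expand norm squared
  have hnorm : ∀ S : Finset (Fin N), ‖Δ S - vbar‖ ^ 2
      = ∑ i, ∑ j, (((if i ∈ S then c i else 0) - p i) * ((if j ∈ S then c j else 0) - p j))
          * (inner ℝ (v i) (v j) : ℝ) := by
    intro S
    rw [← real_inner_self_eq_norm_sq, hD S, sum_inner]
    refine Finset.sum_congr rfl fun i _ => ?_
    rw [inner_sum]
    refine Finset.sum_congr rfl fun j _ => ?_
    rw [real_inner_smul_left, real_inner_smul_right]; ring
  -- key expectation computation
  have key : ∀ i j, (∑ S : Finset (Fin N),
      q S * (((if i ∈ S then c i else 0) - p i) * ((if j ∈ S then c j else 0) - p j)))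
      = c i * c j * cov i j := by
    intro i j
    have h1 : ∀ S : Finset (Fin N),
        q S * (((if i ∈ S then c i else 0) - p i) * ((if j ∈ S then c j else 0) - p j))
        = c i * c j * (if i ∈ S ∧ j ∈ S then q S else 0)
          - c i * p j * (if i ∈ S then q S else 0)
          - p i * c j * (if j ∈ S then q S else 0)
          + p i * p j * q S := by
      intro S
      by_cases hi : i ∈ S <;> by_cases hj : j ∈ S <;> simp [hi, hj] <;> ring
    rw [Finset.sum_congr rfl (fun S _ => h1 S)]
    simp only [Finset.sum_add_distrib, Finset.sum_sub_distrib, ← Finset.mul_sum,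
      ← Finset.sum_filter, hq1]
    rw [← hr i, ← hr j, hcov i j]
    nlinarith [hcr i, hcr j]
  have main : (∑ S : Finset (Fin N), q S * ‖Δ S - vbar‖ ^ 2)
      = ∑ i, ∑ j, (p i * p j) / (r i * r j) * (inner ℝ (v i) (v j) : ℝ) * cov i j := by
    calc (∑ S : Finset (Fin N), q S * ‖Δ S - vbar‖ ^ 2)
        = ∑ S : Finset (Fin N), ∑ i, ∑ j,
            q S * ((((if i ∈ S then c i else 0) - p i) * ((if j ∈ S then c j else 0) - p j))
              * (inner ℝ (v i) (v j) : ℝ)) := by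
          refine Finset.sum_congr rfl fun S _ => ?_
          rw [hnorm S, Finset.mul_sum]
          exact Finset.sum_congr rfl fun i _ => by rw [Finset.mul_sum]
      _ = ∑ i, ∑ j, (∑ S : Finset (Fin N),
            q S * (((if i ∈ S then c i else 0) - p i) * ((if j ∈ S then c j else 0) - p j)))
              * (inner ℝ (v i) (v j) : ℝ) := by
          rw [Finset.sum_comm]
          refine Finset.sum_congr rfl fun i _ => ?_
          rw [Finset.sum_comm]
          refine Finset.sum_congr rfl fun j _ => ?_
          rw [Finset.sum_mul]
          exact Finset.sum_congr rfl fun S _ => by ring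
      _ = ∑ i, ∑ j, (p i * p j) / (r i * r j) * (inner ℝ (v i) (v j) : ℝ) * cov i j := by
          refine Finset.sum_congr rfl fun i _ => Finset.sum_congr rfl fun j _ => ?_
          rw [key i j, hc]
          field_simp
  refine ⟨main, main.trans ?_⟩
  -- trace identity
  have hsym : ∀ i j, cov j i = cov i j := by
    intro i j; rw [hcov, hcov]
    congr 1
    · apply Finset.sum_congr _ (fun _ _ => rfl)
      ext S; simp [and_comm]
    · ring
  have hinner : ∀ i j, (inner ℝ (v i) (v j) : ℝ) = ∑ l, v i l * v j l := by
    intro i j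
    simp [PiLp.inner_apply, RCLike.inner_apply, mul_comm]
  rw [Matrix.trace]
  simp only [Matrix.diag, Matrix.mul_apply, Matrix.transpose_apply, hY, Finset.sum_mul]
  rw [Finset.sum_comm]
  refine Finset.sum_congr rfl fun i _ => ?_
  refine Finset.sum_congr rfl fun j _ => ?_
  rw [hinner, hsym i j, Finset.mul_sum, Finset.sum_mul]
  refine Finset.sum_congr rfl fun l _ => ?_
  field_simp
end

section
/- Suppose the pairwise inner products of the client updates are uniformly bounded: ⟨v_i, v_j⟩ ≤ c for all i, j ∈ {1,…,N}, with c ≥ 0. Then the second moment of the importance-weighted aggregate satisfies E_q[ ‖Δ(S)‖² ] ≤ c Σ_{k=1}^N p_k/r_k, and consequently the client sampling variance satisfies E_q[ ‖Δ(S) − v̄‖² ] ≤ c Σ_{k=1}^N p_k/r_k − ‖v̄‖². -/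
/-- If pairwise inner products of client updates are uniformly bounded by `c ≥ 0`,
then `E_q[‖Δ(S)‖²] ≤ c Σ_k p_k/r_k` and
`E_q[‖Δ(S) − v̄‖²] ≤ c Σ_k p_k/r_k − ‖v̄‖²`. -/
theorem stmt5 (N d : ℕ)
    (p : Fin N → ℝ) (hp0 : ∀ k, 0 ≤ p k) (hp1 : ∑ k, p k = 1)
    (q : Finset (Fin N) → ℝ) (hq0 : ∀ S, 0 ≤ q S)
    (hq1 : ∑ S : Finset (Fin N), q S = 1) (hqempty : q ∅ = 0)
    (v : Fin N → EuclideanSpace ℝ (Fin d))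
    (r : Fin N → ℝ)
    (hr : ∀ k, r k = ∑ S ∈ Finset.univ.filter (fun S : Finset (Fin N) => k ∈ S), q S)
    (hrpos : ∀ k, 0 < r k)
    (Δ : Finset (Fin N) → EuclideanSpace ℝ (Fin d))
    (hΔ : ∀ S, Δ S = ∑ k ∈ S, (p k / r k) • v k)
    (vbar : EuclideanSpace ℝ (Fin d))
    (hvbar : vbar = ∑ k, p k • v k)
    (c : ℝ) (hc : 0 ≤ c)
    (hinner : ∀ i j, (inner ℝ (v i) (v j) : ℝ) ≤ c) :
    (∑ S : Finset (Fin N), q S * ‖Δ S‖ ^ 2) ≤ c * ∑ k, p k / r k ∧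
    (∑ S : Finset (Fin N), q S * ‖Δ S - vbar‖ ^ 2)
      ≤ c * (∑ k, p k / r k) - ‖vbar‖ ^ 2 := by
  classical
  set a : Fin N → ℝ := fun k => p k / r k with ha
  have ha0 : ∀ k, 0 ≤ a k := fun k => div_nonneg (hp0 k) (hrpos k).le
  set T : Fin N → Fin N → ℝ :=
    fun i j => ∑ S : Finset (Fin N), if i ∈ S ∧ j ∈ S then q S else 0 with hT
  have hT0 : ∀ i j, 0 ≤ T i j := by
    intro i j
    exact Finset.sum_nonneg fun S _ => by split <;> [exact hq0 S; exact le_rfl]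
  have hTle : ∀ i j, T i j ≤ r i := by
    intro i j
    rw [hr i, Finset.sum_filter]
    refine Finset.sum_le_sum fun S _ => ?_
    by_cases h1 : i ∈ S
    · simp only [h1, if_true, true_and]
      split <;> [exact le_rfl; exact hq0 S]
    · simp [h1]
  have hTsym : ∀ i j, T i j = T j i := by
    intro i j; simp only [hT, and_comm]
  have hTsqrt : ∀ i j, T i j ≤ Real.sqrt (r i) * Real.sqrt (r j) := by
    intro i j
    rw [← Real.sqrt_mul (hrpos i).le]
    rw [show T i j = Real.sqrt (T i j ^ 2) from (Real.sqrt_sq (hT0 i j)).symm]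
    apply Real.sqrt_le_sqrt
    rw [sq]
    exact mul_le_mul (hTle i j) (by rw [hTsym]; exact hTle j i) (hT0 i j) (hrpos i).le
  -- expansion of the norm
  have hexp : ∀ S : Finset (Fin N),
      ‖Δ S‖ ^ 2 = ∑ i ∈ S, ∑ j ∈ S, (a i * a j) * (inner ℝ (v i) (v j) : ℝ) := by
    intro S
    rw [hΔ S, ← real_inner_self_eq_norm_sq, sum_inner]
    refine Finset.sum_congr rfl fun i hi => ?_
    rw [inner_sum]
    refine Finset.sum_congr rfl fun j hj => ?_
    rw [real_inner_smul_left, real_inner_smul_right]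
    ring
  -- main rewriting
  have hmain : (∑ S : Finset (Fin N), q S * ‖Δ S‖ ^ 2)
      = ∑ i, ∑ j, (a i * a j) * (inner ℝ (v i) (v j) : ℝ) * T i j := by
    have : ∀ S : Finset (Fin N), q S * ‖Δ S‖ ^ 2
        = ∑ i, ∑ j, (if i ∈ S ∧ j ∈ S then q S else 0) * ((a i * a j) * (inner ℝ (v i) (v j) : ℝ)) := by
      intro S
      rw [hexp S, Finset.mul_sum]
      rw [← Finset.sum_filter_add_sum_filter_not Finset.univ (· ∈ S)]
      have h2 : ∀ i ∈ Finset.univ.filter (· ∉ S),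
          (∑ j, (if i ∈ S ∧ j ∈ S then q S else 0) * ((a i * a j) * (inner ℝ (v i) (v j) : ℝ))) = 0 := by
        intro i hi
        simp only [Finset.mem_filter] at hi
        apply Finset.sum_eq_zero
        intro j _
        simp [hi.2]
      rw [Finset.sum_eq_zero h2, add_zero]
      rw [show Finset.univ.filter (· ∈ S) = S by ext x; simp]
      refine Finset.sum_congr rfl fun i hi => ?_
      rw [Finset.mul_sum]
      rw [← Finset.sum_filter_add_sum_filter_not Finset.univ (· ∈ S)]
      have h3 : ∀ j ∈ Finset.univ.filter (· ∉ S),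
          (if i ∈ S ∧ j ∈ S then q S else 0) * ((a i * a j) * (inner ℝ (v i) (v j) : ℝ)) = 0 := by
        intro j hj
        simp only [Finset.mem_filter] at hj
        simp [hj.2]
      rw [Finset.sum_eq_zero h3, add_zero]
      rw [show Finset.univ.filter (· ∈ S) = S by ext x; simp]
      refine Finset.sum_congr rfl fun j hj => ?_
      simp only [hi, hj, and_self, if_true]
    rw [Finset.sum_congr rfl fun S _ => this S]
    rw [Finset.sum_comm]
    refine Finset.sum_congr rfl fun i _ => ?_
    rw [Finset.sum_comm]
    refine Finset.sum_congr rfl fun j _ => ?_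
    rw [hT, ← Finset.sum_mul]
    ring
  -- Cauchy-Schwarz step
  have hCS : (∑ k, a k * Real.sqrt (r k)) ^ 2 ≤ ∑ k, a k := by
    have key : ∀ k, a k * Real.sqrt (r k) = Real.sqrt (p k) * Real.sqrt (a k) := by
      intro k
      rw [← Real.sqrt_mul (hp0 k)]
      have hak : a k = p k / r k := rfl
      have : p k * a k = (a k * Real.sqrt (r k)) ^ 2 := by
        rw [mul_pow, Real.sq_sqrt (hrpos k).le, hak]
        field_simp [(hrpos k).ne']
      rw [this, Real.sqrt_sq (mul_nonneg (ha0 k) (Real.sqrt_nonneg _))]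
    calc (∑ k, a k * Real.sqrt (r k)) ^ 2
        = (∑ k, Real.sqrt (p k) * Real.sqrt (a k)) ^ 2 := by
          rw [Finset.sum_congr rfl fun k _ => key k]
      _ ≤ (∑ k, Real.sqrt (p k) ^ 2) * ∑ k, Real.sqrt (a k) ^ 2 :=
          Finset.sum_mul_sq_le_sq_mul_sq _ _ _
      _ = ∑ k, a k := by
          simp_rw [Real.sq_sqrt (hp0 _), Real.sq_sqrt (ha0 _)]
          rw [hp1, one_mul]
  -- first bound
  have first : (∑ S : Finset (Fin N), q S * ‖Δ S‖ ^ 2) ≤ c * ∑ k, a k := by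
    rw [hmain]
    calc (∑ i, ∑ j, (a i * a j) * (inner ℝ (v i) (v j) : ℝ) * T i j)
        ≤ ∑ i, ∑ j, c * (a i * Real.sqrt (r i)) * (a j * Real.sqrt (r j)) := by
          refine Finset.sum_le_sum fun i _ => Finset.sum_le_sum fun j _ => ?_
          have step1 : (a i * a j) * (inner ℝ (v i) (v j) : ℝ) * T i j
              ≤ (a i * a j) * c * T i j := by
            apply mul_le_mul_of_nonneg_right _ (hT0 i j)
            exact mul_le_mul_of_nonneg_left (hinner i j) (mul_nonneg (ha0 i) (ha0 j))
          refine step1.trans ?_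
          have step2 : (a i * a j) * c * T i j
              ≤ (a i * a j) * c * (Real.sqrt (r i) * Real.sqrt (r j)) :=
            mul_le_mul_of_nonneg_left (hTsqrt i j)
              (mul_nonneg (mul_nonneg (ha0 i) (ha0 j)) hc)
          refine step2.trans (le_of_eq ?_)
          ring
      _ = c * (∑ k, a k * Real.sqrt (r k)) ^ 2 := by
          rw [sq, Finset.sum_mul_sum, Finset.mul_sum]
          refine Finset.sum_congr rfl fun i _ => ?_
          rw [Finset.mul_sum]
          refine Finset.sum_congr rfl fun j _ => ?_
          ring
      _ ≤ c * ∑ k, a k := mul_le_mul_of_nonneg_left hCS hc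
  -- unbiasedness
  have hunb : (∑ S : Finset (Fin N), q S • Δ S) = vbar := by
    have : ∀ S : Finset (Fin N), q S • Δ S
        = ∑ k, (if k ∈ S then q S else 0) • (a k • v k) := by
      intro S
      rw [hΔ S, Finset.smul_sum]
      rw [← Finset.sum_filter_add_sum_filter_not Finset.univ (· ∈ S)]
      have h2 : ∀ k ∈ Finset.univ.filter (· ∉ S),
          (if k ∈ S then q S else 0) • (a k • v k) = 0 := by
        intro k hk
        simp only [Finset.mem_filter] at hk
        simp [hk.2]
      rw [Finset.sum_eq_zero h2, add_zero]
      rw [show Finset.univ.filter (· ∈ S) = S by ext x; simp]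
      refine Finset.sum_congr rfl fun k hk => ?_
      simp [hk]
      rfl
    rw [Finset.sum_congr rfl fun S _ => this S, Finset.sum_comm, hvbar]
    refine Finset.sum_congr rfl fun k _ => ?_
    rw [← Finset.sum_smul]
    have hrk : (∑ S : Finset (Fin N), if k ∈ S then q S else 0) = r k := by
      rw [hr k, Finset.sum_filter]
    rw [hrk, smul_smul]
    congr 1
    have hak : a k = p k / r k := rfl
    rw [hak]
    rw [mul_comm]
    exact div_mul_cancel₀ _ (hrpos k).ne'
  refine ⟨first, ?_⟩
  -- second part
  have hexpand : ∀ S : Finset (Fin N),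
      q S * ‖Δ S - vbar‖ ^ 2
      = q S * ‖Δ S‖ ^ 2 - 2 * (q S * (inner ℝ (Δ S) vbar : ℝ)) + q S * ‖vbar‖ ^ 2 := by
    intro S
    rw [norm_sub_sq_real]
    ring
  rw [Finset.sum_congr rfl fun S _ => hexpand S]
  rw [Finset.sum_add_distrib, Finset.sum_sub_distrib]
  have h1 : (∑ S : Finset (Fin N), q S * ‖vbar‖ ^ 2) = ‖vbar‖ ^ 2 := by
    rw [← Finset.sum_mul, hq1, one_mul]
  have h2 : (∑ S : Finset (Fin N), 2 * (q S * (inner ℝ (Δ S) vbar : ℝ))) = 2 * ‖vbar‖ ^ 2 := by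
    rw [← Finset.mul_sum]
    congr 1
    have : (∑ S : Finset (Fin N), q S * (inner ℝ (Δ S) vbar : ℝ))
        = (inner ℝ (∑ S : Finset (Fin N), q S • Δ S) vbar : ℝ) := by
      rw [sum_inner]
      exact Finset.sum_congr rfl fun S _ => (real_inner_smul_left _ _ _).symm
    rw [this, hunb, real_inner_self_eq_norm_sq]
  rw [h1, h2]
  have := sub_le_sub_right (add_le_add_right (sub_le_sub_right first (2 * ‖vbar‖ ^ 2)) (‖vbar‖ ^ 2)) 0
  linarith
end

section
/- Suppose ‖v_k‖² ≤ c for every client k (with c ≥ 0), that the pairwise inner products of updates are nonnegative (⟨v_i, v_j⟩ ≥ 0 for all i ≠ j), and that the selection indicators are pairwise uncorrelated or negatively correlated, i.e., Cov(X_i, X_j) = E[X_i X_j] − r_i r_j ≤ 0 for all i ≠ j. Then the client sampling variance satisfies E_q[ ‖Δ(S) − v̄‖² ] ≤ c ( Σ_{k=1}^N p_k²/r_k + Σ_{k=1}^N p_k² ). -/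
/-- If `‖v_k‖² ≤ c`, pairwise inner products of updates are nonnegative for `i ≠ j`,
and selection indicators are pairwise uncorrelated or negatively correlated
(`E[XᵢXⱼ] − rᵢrⱼ ≤ 0` for `i ≠ j`), then
`E_q[‖Δ(S) − v̄‖²] ≤ c (Σ_k p_k²/r_k + Σ_k p_k²)`. -/
theorem stmt6 (N d : ℕ)
    (p : Fin N → ℝ) (hp0 : ∀ k, 0 ≤ p k) (hp1 : ∑ k, p k = 1)
    (q : Finset (Fin N) → ℝ) (hq0 : ∀ S, 0 ≤ q S)
    (hq1 : ∑ S : Finset (Fin N), q S = 1) (hqempty : q ∅ = 0)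
    (v : Fin N → EuclideanSpace ℝ (Fin d))
    (r : Fin N → ℝ)
    (hr : ∀ k, r k = ∑ S ∈ Finset.univ.filter (fun S : Finset (Fin N) => k ∈ S), q S)
    (hrpos : ∀ k, 0 < r k)
    (Δ : Finset (Fin N) → EuclideanSpace ℝ (Fin d))
    (hΔ : ∀ S, Δ S = ∑ k ∈ S, (p k / r k) • v k)
    (vbar : EuclideanSpace ℝ (Fin d))
    (hvbar : vbar = ∑ k, p k • v k)
    (c : ℝ) (hc : 0 ≤ c)
    (hvnorm : ∀ k, ‖v k‖ ^ 2 ≤ c)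
    (hinner : ∀ i j, i ≠ j → 0 ≤ (inner ℝ (v i) (v j) : ℝ))
    (hcov : ∀ i j, i ≠ j →
      (∑ S ∈ Finset.univ.filter (fun S : Finset (Fin N) => i ∈ S ∧ j ∈ S), q S)
        - r i * r j ≤ 0) :
    (∑ S : Finset (Fin N), q S * ‖Δ S - vbar‖ ^ 2)
      ≤ c * ((∑ k, p k ^ 2 / r k) + ∑ k, p k ^ 2) := by
  classical
  set m : Fin N → Fin N → ℝ := fun i j =>
    ∑ S ∈ Finset.univ.filter (fun S : Finset (Fin N) => i ∈ S ∧ j ∈ S), q S with hm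
  set a : Fin N → Finset (Fin N) → ℝ := fun k S =>
    p k / r k * (if k ∈ S then (1:ℝ) else 0) - p k with ha
  -- difference as a single sum
  have hdiff : ∀ S, Δ S - vbar = ∑ k, a k S • v k := by
    intro S
    rw [hΔ, hvbar]
    have h1 : ∑ k ∈ S, (p k / r k) • v k
        = ∑ k, (p k / r k * (if k ∈ S then (1:ℝ) else 0)) • v k := by
      rw [Finset.sum_congr rfl (fun k _ => rfl)]
      rw [show (∑ k, (p k / r k * (if k ∈ S then (1:ℝ) else 0)) • v k)
          = ∑ k, (if k ∈ S then (p k / r k) • v k else 0) from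
        Finset.sum_congr rfl (fun k _ => by by_cases h : k ∈ S <;> simp [h])]
      rw [Finset.sum_ite_mem, Finset.univ_inter]
    rw [h1, ← Finset.sum_sub_distrib]
    exact Finset.sum_congr rfl fun k _ => by rw [ha, sub_smul]
  -- norm squared expansion
  have hnorm : ∀ S, ‖Δ S - vbar‖ ^ 2
      = ∑ i, ∑ j, a i S * a j S * (inner ℝ (v i) (v j) : ℝ) := by
    intro S
    rw [hdiff, ← real_inner_self_eq_norm_sq, sum_inner]
    refine Finset.sum_congr rfl fun i _ => ?_
    rw [inner_sum]
    refine Finset.sum_congr rfl fun j _ => ?_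
    rw [real_inner_smul_left, real_inner_smul_right]; ring
  -- LHS rewritten
  have hlhs : (∑ S : Finset (Fin N), q S * ‖Δ S - vbar‖ ^ 2)
      = ∑ i, ∑ j, (∑ S : Finset (Fin N), q S * (a i S * a j S)) * (inner ℝ (v i) (v j) : ℝ) := by
    simp_rw [hnorm, Finset.mul_sum, Finset.sum_mul]
    rw [Finset.sum_comm]
    refine Finset.sum_congr rfl fun i _ => ?_
    rw [Finset.sum_comm]
    refine Finset.sum_congr rfl fun j _ => Finset.sum_congr rfl fun S _ => by ring
  -- compute T i j
  have hT : ∀ i j, (∑ S : Finset (Fin N), q S * (a i S * a j S))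
      = p i * p j * (m i j / (r i * r j) - 1) := by
    intro i j
    have hri : ∑ S : Finset (Fin N), q S * (if i ∈ S then (1:ℝ) else 0) = r i := by
      rw [hr]
      rw [Finset.sum_filter]
      exact Finset.sum_congr rfl fun S _ => by by_cases h : i ∈ S <;> simp [h]
    have hrj : ∑ S : Finset (Fin N), q S * (if j ∈ S then (1:ℝ) else 0) = r j := by
      rw [hr]
      rw [Finset.sum_filter]
      exact Finset.sum_congr rfl fun S _ => by by_cases h : j ∈ S <;> simp [h]
    have hmij : ∑ S : Finset (Fin N), q S * ((if i ∈ S then (1:ℝ) else 0) * (if j ∈ S then (1:ℝ) else 0)) = m i j := by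
      rw [hm]; beta_reduce
      rw [Finset.sum_filter]
      refine Finset.sum_congr rfl fun S _ => ?_
      by_cases h1 : i ∈ S <;> by_cases h2 : j ∈ S <;> simp [h1, h2]
    have expand : ∀ S, q S * (a i S * a j S)
        = (p i / r i) * (p j / r j) * (q S * ((if i ∈ S then (1:ℝ) else 0) * (if j ∈ S then (1:ℝ) else 0)))
          - (p i / r i) * p j * (q S * (if i ∈ S then (1:ℝ) else 0))
          - p i * (p j / r j) * (q S * (if j ∈ S then (1:ℝ) else 0))
          + p i * p j * q S := by
      intro S; rw [ha]; ring
    rw [Finset.sum_congr rfl (fun S _ => expand S)]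
    simp_rw [Finset.sum_add_distrib, Finset.sum_sub_distrib, ← Finset.mul_sum]
    rw [hri, hrj, hmij, hq1]
    have h1 : r i ≠ 0 := (hrpos i).ne'
    have h2 : r j ≠ 0 := (hrpos j).ne'
    field_simp
    ring
  rw [hlhs]
  rw [Finset.sum_congr rfl (fun i _ => Finset.sum_congr rfl fun j _ => by rw [hT i j])]
  -- split diag / offdiag and bound
  have step : ∀ i : Fin N,
      (∑ j, p i * p j * (m i j / (r i * r j) - 1) * (inner ℝ (v i) (v j) : ℝ))
        ≤ c * (p i ^ 2 / r i + p i ^ 2) := by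
    intro i
    rw [← Finset.sum_erase_add _ _ (Finset.mem_univ i)]
    have hoff : (∑ j ∈ Finset.univ.erase i, p i * p j * (m i j / (r i * r j) - 1) * (inner ℝ (v i) (v j) : ℝ)) ≤ 0 := by
      refine Finset.sum_nonpos fun j hj => ?_
      have hne : i ≠ j := fun h => (Finset.mem_erase.mp hj).1 h.symm
      have hrr : 0 < r i * r j := mul_pos (hrpos i) (hrpos j)
      have hle : m i j / (r i * r j) - 1 ≤ 0 := by
        rw [sub_nonpos, div_le_one hrr]
        have := hcov i j hne
        linarith
      have hT0 : p i * p j * (m i j / (r i * r j) - 1) ≤ 0 :=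
        mul_nonpos_of_nonneg_of_nonpos (mul_nonneg (hp0 i) (hp0 j)) hle
      exact mul_nonpos_of_nonpos_of_nonneg hT0 (hinner i j hne)
    have hmii : m i i = r i := by
      rw [hm, hr]
      exact Finset.sum_congr (by ext S; simp) fun _ _ => rfl
    have hdiag : p i * p i * (m i i / (r i * r i) - 1) * (inner ℝ (v i) (v i) : ℝ)
        ≤ c * (p i ^ 2 / r i + p i ^ 2) := by
      rw [hmii, real_inner_self_eq_norm_sq]
      have hri : 0 < r i := hrpos i
      have h1 : r i / (r i * r i) = 1 / r i := by field_simp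
      have hv2 : (0:ℝ) ≤ ‖v i‖ ^ 2 := sq_nonneg _
      have hvc := hvnorm i
      have hp2 : (0:ℝ) ≤ p i ^ 2 := sq_nonneg _
      have key : p i * p i * (r i / (r i * r i) - 1) * ‖v i‖ ^ 2
          = p i ^ 2 / r i * ‖v i‖ ^ 2 - p i ^ 2 * ‖v i‖ ^ 2 := by
        rw [h1]; field_simp
      rw [key]
      have b1 : p i ^ 2 / r i * ‖v i‖ ^ 2 ≤ p i ^ 2 / r i * c :=
        mul_le_mul_of_nonneg_left hvc (div_nonneg hp2 hri.le)
      have b2 : -(p i ^ 2 * ‖v i‖ ^ 2) ≤ p i ^ 2 * c := by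
        nlinarith
      nlinarith
    linarith
  calc (∑ i, ∑ j, p i * p j * (m i j / (r i * r j) - 1) * (inner ℝ (v i) (v j) : ℝ))
      ≤ ∑ i, c * (p i ^ 2 / r i + p i ^ 2) := Finset.sum_le_sum fun i _ => step i
    _ = c * ((∑ k, p k ^ 2 / r k) + ∑ k, p k ^ 2) := by
        rw [← Finset.mul_sum, Finset.sum_add_distrib]
end

section
/- Let E ≥ 1, γ > 0, β > 0, μ > 0 and B ≥ 0 be real constants with βμ > E and βμ ≤ γ + E. Let (a_t)_{t ≥ 1} be a sequence of nonnegative reals satisfying, for all t ≥ 1, a_{t+1} ≤ (1 − βμ/(tE + γ)) a_t + β² B/(tE + γ)². Then, with v = max{ β² B/(βμ − E), (γ + E) a_1 }, one has a_t ≤ v/(γ + tE) for all t ≥ 1. -/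
/-- Stochastic-approximation recursion: if `a_{t+1} ≤ (1 − βμ/(tE+γ)) a_t + β²B/(tE+γ)²`
for all `t ≥ 1`, with `βμ > E` and `βμ ≤ γ + E`, then
`a_t ≤ v/(γ + tE)` for all `t ≥ 1`, where `v = max{β²B/(βμ−E), (γ+E)a_1}`. -/
theorem stmt9 (E γ β μ B : ℝ)
    (hE : 1 ≤ E) (hγ : 0 < γ) (hβ : 0 < β) (hμ : 0 < μ) (hB : 0 ≤ B)
    (hβμ : E < β * μ) (hβμ' : β * μ ≤ γ + E)
    (a : ℕ → ℝ) (ha0 : ∀ t, 1 ≤ t → 0 ≤ a t)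
    (hrec : ∀ t : ℕ, 1 ≤ t →
      a (t + 1) ≤ (1 - β * μ / ((t : ℝ) * E + γ)) * a t
        + β ^ 2 * B / ((t : ℝ) * E + γ) ^ 2) :
    ∀ t : ℕ, 1 ≤ t →
      a t ≤ max (β ^ 2 * B / (β * μ - E)) ((γ + E) * a 1) / (γ + (t : ℝ) * E) := by
  set v := max (β ^ 2 * B / (β * μ - E)) ((γ + E) * a 1) with hvdef
  have hμE : 0 < β * μ - E := by linarith
  have hv0 : 0 ≤ v := le_trans (by positivity) (le_max_left _ _)
  have hvB : β ^ 2 * B ≤ v * (β * μ - E) := by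
    have h1 : β ^ 2 * B / (β * μ - E) ≤ v := le_max_left _ _
    have := (div_le_iff₀ hμE).mp h1
    linarith
  intro t ht
  induction t, ht using Nat.le_induction with
  | base =>
    have hD : 0 < γ + (1 : ℝ) * E := by linarith
    rw [Nat.cast_one, le_div_iff₀ hD]
    have h2 : (γ + E) * a 1 ≤ v := le_max_right _ _
    linarith
  | succ t ht ih =>
    have htR : (1 : ℝ) ≤ (t : ℕ) := by exact_mod_cast ht
    have hD : (0 : ℝ) < (t : ℝ) * E + γ := by nlinarith
    have hcoef : 0 ≤ 1 - β * μ / ((t : ℝ) * E + γ) := by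
      rw [sub_nonneg, div_le_one hD]
      nlinarith
    have h1 : a (t + 1) ≤ (1 - β * μ / ((t : ℝ) * E + γ)) * (v / (γ + (t : ℝ) * E))
        + β ^ 2 * B / ((t : ℝ) * E + γ) ^ 2 :=
      le_trans (hrec t ht) (by
        have := mul_le_mul_of_nonneg_left ih hcoef
        linarith)
    have hD2 : (0 : ℝ) < ((t : ℝ) * E + γ) ^ 2 := by positivity
    have hD3 : (0 : ℝ) < γ + ((t : ℝ) + 1) * E := by nlinarith
    have key : (1 - β * μ / ((t : ℝ) * E + γ)) * (v / (γ + (t : ℝ) * E))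
        + β ^ 2 * B / ((t : ℝ) * E + γ) ^ 2 ≤ v / (γ + ((t : ℝ) + 1) * E) := by
      have heq : (1 - β * μ / ((t : ℝ) * E + γ)) * (v / (γ + (t : ℝ) * E))
          + β ^ 2 * B / ((t : ℝ) * E + γ) ^ 2
          = ((((t : ℝ) * E + γ) - β * μ) * v + β ^ 2 * B) / ((t : ℝ) * E + γ) ^ 2 := by
        field_simp
        ring
      rw [heq, div_le_div_iff₀ hD2 hD3]
      nlinarith [mul_le_mul_of_nonneg_right hvB hD3.le, mul_nonneg hv0 (sq_nonneg E), mul_nonneg hv0 hD3.le]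
    calc a (t + 1) ≤ _ := h1
      _ ≤ v / (γ + ((t : ℝ) + 1) * E) := key
      _ = v / (γ + ((t : ℕ) + 1 : ℕ) * E) := by push_cast; ring_nf
end
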